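/- Let ψ be a tripartite pure state on systems A, B, C such that ρ_AC = ρ_A ⊗ ρ_C, the matrix ρ_A has no zero eigenvalues, and ρ_A(j) = ρ_A for every measurement outcome j on B with P_j > 0. Then the eigenvalues λ_1 ≥ λ_2 ≥ … ≥ λ_{d_C} of ρ_C, listed in decreasing order, satisfy Σ_{k=1}^{m} λ_k ≤ min(m, d_A)/d_A for every 1 ≤ m ≤ d_C; that is, the eigenvalue sequence of ρ_C is majorized by the sequence with d_A entries equal to 1/d_A and all remaining entries equal to 0. -/

import Mathlib

open scoped BigOperators Kronecker
open scoped Classical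

noncomputable def rhoA {dA dB dC : ℕ} (ψ : Fin dA × Fin dB × Fin dC → ℂ) :
    Matrix (Fin dA) (Fin dA) ℂ :=
  Matrix.of fun i i' => ∑ j : Fin dB, ∑ k : Fin dC,
    ψ (i, j, k) * (starRingEnd ℂ) (ψ (i', j, k))

noncomputable def rhoC {dA dB dC : ℕ} (ψ : Fin dA × Fin dB × Fin dC → ℂ) :
    Matrix (Fin dC) (Fin dC) ℂ :=
  Matrix.of fun k k' => ∑ i : Fin dA, ∑ j : Fin dB,
    ψ (i, j, k) * (starRingEnd ℂ) (ψ (i, j, k'))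

noncomputable def rhoAC {dA dB dC : ℕ} (ψ : Fin dA × Fin dB × Fin dC → ℂ) :
    Matrix (Fin dA × Fin dC) (Fin dA × Fin dC) ℂ :=
  Matrix.of fun p q => ∑ j : Fin dB, ψ (p.1, j, p.2) * (starRingEnd ℂ) (ψ (q.1, j, q.2))

noncomputable def probB {dA dB dC : ℕ} (ψ : Fin dA × Fin dB × Fin dC → ℂ) (j : Fin dB) : ℝ :=
  ∑ i : Fin dA, ∑ k : Fin dC, Complex.normSq (ψ (i, j, k))

noncomputable def rhoAPost {dA dB dC : ℕ} (ψ : Fin dA × Fin dB × Fin dC → ℂ) (j : Fin dB) :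
    Matrix (Fin dA) (Fin dA) ℂ :=
  Matrix.of fun i i' => (probB ψ j : ℂ)⁻¹ *
    ∑ k : Fin dC, ψ (i, j, k) * (starRingEnd ℂ) (ψ (i', j, k))

def Normalized {dA dB dC : ℕ} (ψ : Fin dA × Fin dB × Fin dC → ℂ) : Prop :=
  ∑ i : Fin dA, ∑ j : Fin dB, ∑ k : Fin dC, Complex.normSq (ψ (i, j, k)) = 1

set_option maxHeartbeats 1000000
set_option linter.deprecated false

open Matrix Complex ComplexConjugate

lemma sum_swap3 {α β γ M : Type*} [Fintype α] [Fintype β] [Fintype γ] [AddCommMonoid M]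
    (f : α → β → γ → M) :
    ∑ a, ∑ b, ∑ c, f a b c = ∑ b, ∑ c, ∑ a, f a b c := by
  calc ∑ a, ∑ b, ∑ c, f a b c = ∑ b, ∑ a, ∑ c, f a b c := Finset.sum_comm
    _ = ∑ b, ∑ c, ∑ a, f a b c := Finset.sum_congr rfl fun b _ => Finset.sum_comm

lemma sum_swap4 {α β γ δ M : Type*} [Fintype α] [Fintype β] [Fintype γ] [Fintype δ]
    [AddCommMonoid M] (f : α → β → γ → δ → M) :
    ∑ a, ∑ b, ∑ c, ∑ d, f a b c d = ∑ c, ∑ d, ∑ a, ∑ b, f a b c d := by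
  calc ∑ a, ∑ b, ∑ c, ∑ d, f a b c d
      = ∑ a, ∑ c, ∑ b, ∑ d, f a b c d := Finset.sum_congr rfl fun a _ => Finset.sum_comm
    _ = ∑ c, ∑ a, ∑ b, ∑ d, f a b c d := Finset.sum_comm
    _ = ∑ c, ∑ a, ∑ d, ∑ b, f a b c d :=
        Finset.sum_congr rfl fun c _ => Finset.sum_congr rfl fun a _ => Finset.sum_comm
    _ = ∑ c, ∑ d, ∑ a, ∑ b, f a b c d := Finset.sum_congr rfl fun c _ => Finset.sum_comm

lemma cs_aux {n : ℕ} (x a : Fin n → ℂ) :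
    ‖∑ k, x k * a k‖ ^ 2 ≤
      (∑ k, Complex.normSq (x k)) * (∑ k, Complex.normSq (a k)) := by
  calc ‖∑ k, x k * a k‖ ^ 2
      ≤ (∑ k, ‖x k‖ * ‖a k‖) ^ 2 := by
        have h1 : ‖∑ k, x k * a k‖ ≤ ∑ k, ‖x k‖ * ‖a k‖ := by
          refine le_trans (norm_sum_le _ _) ?_
          exact le_of_eq (Finset.sum_congr rfl fun k _ => norm_mul _ _)
        have h2 : (0:ℝ) ≤ ‖∑ k, x k * a k‖ := norm_nonneg _
        nlinarith
    _ ≤ (∑ k, ‖x k‖ ^ 2) * (∑ k, ‖a k‖ ^ 2) :=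
        Finset.sum_mul_sq_le_sq_mul_sq _ _ _
    _ = (∑ k, Complex.normSq (x k)) * (∑ k, Complex.normSq (a k)) := by
        simp [Complex.sq_norm]

lemma rhoC_quad {dA dB dC : ℕ} (ψ : Fin dA × Fin dB × Fin dC → ℂ) (x : Fin dC → ℂ) :
    dotProduct (star x) (rhoC ψ *ᵥ x)
      = ∑ i : Fin dA, ∑ j : Fin dB,
          (∑ k, conj (x k) * ψ (i,j,k)) * conj (∑ k, conj (x k) * ψ (i,j,k)) := by
  calc dotProduct (star x) (rhoC ψ *ᵥ x)
      = ∑ a, ∑ b, ∑ i, ∑ j, conj (x a) * ψ (i,j,a) * conj (ψ (i,j,b)) * x b := by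
        simp only [dotProduct, Matrix.mulVec, Pi.star_apply, Complex.star_def, rhoC,
          Matrix.of_apply, Finset.sum_mul, Finset.mul_sum]
        exact Finset.sum_congr rfl fun a _ => Finset.sum_congr rfl fun b _ =>
          Finset.sum_congr rfl fun i _ => Finset.sum_congr rfl fun j _ => by ring
    _ = ∑ i, ∑ j, ∑ a, ∑ b, conj (x a) * ψ (i,j,a) * conj (ψ (i,j,b)) * x b := sum_swap4 _
    _ = _ := by
        refine Finset.sum_congr rfl fun i _ => Finset.sum_congr rfl fun j _ => ?_
        rw [map_sum, Finset.sum_mul_sum]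
        exact Finset.sum_congr rfl fun a _ => Finset.sum_congr rfl fun b _ => by
          simp only [_root_.map_mul, Complex.conj_conj] <;> ring

lemma rhoC_quad_nonneg {dA dB dC : ℕ} (ψ : Fin dA × Fin dB × Fin dC → ℂ) (x : Fin dC → ℂ) :
    0 ≤ (dotProduct (star x) (rhoC ψ *ᵥ x)).re := by
  rw [rhoC_quad]
  have h : ∀ (i : Fin dA) (j : Fin dB),
      (∑ k, conj (x k) * ψ (i,j,k)) * conj (∑ k, conj (x k) * ψ (i,j,k))
        = ((Complex.normSq (∑ k, conj (x k) * ψ (i,j,k)) : ℝ) : ℂ) := fun i j =>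
    Complex.mul_conj _
  simp only [h, Complex.re_sum, Complex.ofReal_re]
  exact Finset.sum_nonneg fun i _ => Finset.sum_nonneg fun j _ => Complex.normSq_nonneg _

lemma trace_rhoC {dA dB dC : ℕ} (ψ : Fin dA × Fin dB × Fin dC → ℂ) (hnorm : Normalized ψ)
    (hC : (rhoC ψ).IsHermitian) : ∑ k, hC.eigenvalues k = 1 := by
  have hdiag := hC.conjStarAlgAut_star_eigenvectorUnitary
  rw [Unitary.conjStarAlgAut_star_apply] at hdiag
  have hUU : (hC.eigenvectorUnitary : Matrix (Fin dC) (Fin dC) ℂ) *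
      star (hC.eigenvectorUnitary : Matrix (Fin dC) (Fin dC) ℂ) = 1 :=
    (Matrix.mem_unitaryGroup_iff).mp (hC.eigenvectorUnitary).2
  have h1 : Matrix.trace (Matrix.diagonal (RCLike.ofReal ∘ hC.eigenvalues) : Matrix (Fin dC) (Fin dC) ℂ)
      = Matrix.trace (rhoC ψ) := by
    rw [← hdiag, Matrix.trace_mul_cycle, hUU, Matrix.one_mul]
  have h2 : Matrix.trace (rhoC ψ) = ((1:ℝ) : ℂ) := by
    have h3 : Matrix.trace (rhoC ψ) = ∑ k : Fin dC, ∑ i : Fin dA, ∑ j : Fin dB,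
        ((Complex.normSq (ψ (i,j,k)) : ℝ) : ℂ) := by
      simp only [Matrix.trace, Matrix.diag, rhoC, Matrix.of_apply]
      exact Finset.sum_congr rfl fun k _ => Finset.sum_congr rfl fun i _ =>
        Finset.sum_congr rfl fun j _ => Complex.mul_conj _
    rw [h3, sum_swap3]
    norm_cast
  rw [h2] at h1
  have h4 : (∑ k, ((hC.eigenvalues k : ℝ) : ℂ)) = ((1:ℝ):ℂ) := by
    rw [← h1]
    simp [Matrix.trace_diagonal]
  exact_mod_cast h4

lemma main_bound {dA dB dC : ℕ} (ψ : Fin dA × Fin dB × Fin dC → ℂ) (hnorm : Normalized ψ)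
    (hfac : rhoAC ψ = rhoA ψ ⊗ₖ rhoC ψ)
    (hA : (rhoA ψ).IsHermitian)
    (hAfull : ∀ a : Fin dA, hA.eigenvalues a ≠ 0)
    (hpost : ∀ j : Fin dB, 0 < probB ψ j → rhoAPost ψ j = rhoA ψ)
    (x : Fin dC → ℂ) :
    (dA : ℝ) * (dotProduct (star x) (rhoC ψ *ᵥ x)).re ≤ ∑ k, Complex.normSq (x k) := by
  classical
  set ρ := rhoA ψ with hρdef
  have hdet : IsUnit ρ.det := by
    rw [hA.det_eq_prod_eigenvalues]
    refine IsUnit.mk0 _ (Finset.prod_ne_zero_iff.mpr fun a _ => ?_)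
    exact Complex.ofReal_ne_zero.mpr (hAfull a)
  have hinv1 : ρ * ρ⁻¹ = 1 := Matrix.mul_nonsing_inv ρ hdet
  have hinv2 : ρ⁻¹ * ρ = 1 := Matrix.nonsing_inv_mul ρ hdet
  set Q : ℂ := dotProduct (star x) (rhoC ψ *ᵥ x) with hQdef
  set u : Fin dB → Fin dA → ℂ := fun j i => ∑ k, conj (x k) * ψ (i,j,k) with hudef
  set v : Fin dB → Fin dA → ℂ := fun j => ρ⁻¹ *ᵥ u j with hvdef
  set w : Fin dB → ℂ := fun j => ∑ i', conj (u j i') * v j i' with hwdef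
  set X : ℝ := ∑ k, Complex.normSq (x k) with hXdef
  have hXnn : 0 ≤ X := Finset.sum_nonneg fun _ _ => Complex.normSq_nonneg _
  have hvapp : ∀ j i', v j i' = ∑ i, ρ⁻¹ i' i * u j i := by
    intro j i'
    simp [hvdef, Matrix.mulVec, dotProduct]
  have hent : ∀ (i i' : Fin dA) (a b : Fin dC),
      (∑ j, ψ (i,j,a) * conj (ψ (i',j,b))) = ρ i i' * rhoC ψ a b := by
    intro i i' a b
    have h := congrFun (congrFun hfac (i,a)) (i',b)
    simpa [rhoAC, Matrix.kroneckerMap_apply, Matrix.of_apply, hρdef] using h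
  have hQ : Q = ∑ a, ∑ b, conj (x a) * (rhoC ψ a b * x b) := by
    rw [hQdef]
    simp only [dotProduct, Matrix.mulVec, Pi.star_apply, Complex.star_def, Finset.mul_sum]
  have hin : ∀ (i i' : Fin dA), ∑ j, u j i * conj (u j i') = ρ i i' * Q := by
    intro i i'
    calc ∑ j, u j i * conj (u j i')
        = ∑ j, ∑ a, ∑ b, conj (x a) * ψ (i,j,a) * (x b * conj (ψ (i',j,b))) := by
          refine Finset.sum_congr rfl fun j _ => ?_
          simp only [hudef]
          rw [map_sum, Finset.sum_mul_sum]
          exact Finset.sum_congr rfl fun a _ => Finset.sum_congr rfl fun b _ => by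
            simp only [_root_.map_mul, Complex.conj_conj] <;> ring
      _ = ∑ a, ∑ b, ∑ j, conj (x a) * ψ (i,j,a) * (x b * conj (ψ (i',j,b))) := sum_swap3 _
      _ = ∑ a, ∑ b, (conj (x a) * x b) * ∑ j, ψ (i,j,a) * conj (ψ (i',j,b)) := by
          refine Finset.sum_congr rfl fun a _ => Finset.sum_congr rfl fun b _ => ?_
          rw [Finset.mul_sum]
          exact Finset.sum_congr rfl fun j _ => by ring
      _ = ∑ a, ∑ b, (conj (x a) * x b) * (ρ i i' * rhoC ψ a b) :=
          Finset.sum_congr rfl fun a _ => Finset.sum_congr rfl fun b _ => by rw [hent]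
      _ = ρ i i' * ∑ a, ∑ b, conj (x a) * (rhoC ψ a b * x b) := by
          rw [Finset.mul_sum]
          refine Finset.sum_congr rfl fun a _ => ?_
          rw [Finset.mul_sum]
          exact Finset.sum_congr rfl fun b _ => by ring
      _ = ρ i i' * Q := by rw [← hQ]
  have htrace : ∑ i' : Fin dA, ∑ i : Fin dA, ρ⁻¹ i' i * ρ i i' = (dA:ℂ) := by
    calc ∑ i' : Fin dA, ∑ i, ρ⁻¹ i' i * ρ i i'
        = ∑ i' : Fin dA, (ρ⁻¹ * ρ) i' i' :=
          Finset.sum_congr rfl fun i' _ => (Matrix.mul_apply).symm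
      _ = ∑ i' : Fin dA, (1 : Matrix (Fin dA) (Fin dA) ℂ) i' i' := by rw [hinv2]
      _ = (dA:ℂ) := by simp [Matrix.one_apply]
  have claimA : ∑ j, w j = (dA:ℂ) * Q := by
    calc ∑ j, w j
        = ∑ j, ∑ i', ∑ i, conj (u j i') * (ρ⁻¹ i' i * u j i) := by
          refine Finset.sum_congr rfl fun j _ => Finset.sum_congr rfl fun i' _ => ?_
          rw [hvapp j i', Finset.mul_sum]
      _ = ∑ i', ∑ i, ∑ j, conj (u j i') * (ρ⁻¹ i' i * u j i) := sum_swap3 _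
      _ = ∑ i', ∑ i, ρ⁻¹ i' i * ∑ j, u j i * conj (u j i') := by
          refine Finset.sum_congr rfl fun i' _ => Finset.sum_congr rfl fun i _ => ?_
          rw [Finset.mul_sum]
          exact Finset.sum_congr rfl fun j _ => by ring
      _ = ∑ i', ∑ i, ρ⁻¹ i' i * (ρ i i' * Q) :=
          Finset.sum_congr rfl fun i' _ => Finset.sum_congr rfl fun i _ => by rw [hin]
      _ = (∑ i', ∑ i, ρ⁻¹ i' i * ρ i i') * Q := by
          rw [Finset.sum_mul]
          refine Finset.sum_congr rfl fun i' _ => ?_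
          rw [Finset.sum_mul]
          exact Finset.sum_congr rfl fun i _ => by ring
      _ = (dA:ℂ) * Q := by rw [htrace]
  have hPnn : ∀ j, 0 ≤ probB ψ j := fun j =>
    Finset.sum_nonneg fun _ _ => Finset.sum_nonneg fun _ _ => Complex.normSq_nonneg _
  have claimB : ∀ j, (w j).re ≤ probB ψ j * X := by
    intro j
    rcases eq_or_lt_of_le (hPnn j) with hP0 | hP
    · have hP0' : ∑ i : Fin dA, ∑ k : Fin dC, Complex.normSq (ψ (i,j,k)) = 0 := by
        simpa [probB] using hP0.symm
      have hz : ∀ i k, ψ (i,j,k) = 0 := by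
        intro i k
        have h1 := (Finset.sum_eq_zero_iff_of_nonneg
          (fun i _ => Finset.sum_nonneg fun k _ => Complex.normSq_nonneg _)).mp hP0' i
          (Finset.mem_univ i)
        have h2 := (Finset.sum_eq_zero_iff_of_nonneg
          (fun k _ => Complex.normSq_nonneg _)).mp h1 k (Finset.mem_univ k)
        exact Complex.normSq_eq_zero.mp h2
      have hw0 : w j = 0 := by simp [hwdef, hudef, hz]
      rw [hw0, ← hP0]
      simp
    · have hPne : (probB ψ j : ℂ) ≠ 0 := Complex.ofReal_ne_zero.mpr (ne_of_gt hP)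
      have hM : ∀ i i', ∑ k, ψ (i,j,k) * conj (ψ (i',j,k)) = (probB ψ j : ℂ) * ρ i i' := by
        intro i i'
        have h := congrFun (congrFun (hpost j hP) i) i'
        simp only [rhoAPost, Matrix.of_apply] at h
        rw [← h, ← mul_assoc, mul_inv_cancel₀ hPne, one_mul]
      set a : Fin dC → ℂ := fun k => ∑ i', v j i' * conj (ψ (i',j,k)) with hadef
      have hwx : w j = ∑ k, x k * a k := by
        calc w j = ∑ i', (∑ k, x k * conj (ψ (i',j,k))) * v j i' := by
              refine Finset.sum_congr rfl fun i' _ => ?_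
              congr 1
              simp only [hudef]
              rw [map_sum]
              exact Finset.sum_congr rfl fun k _ => by
                simp only [_root_.map_mul, Complex.conj_conj]
          _ = ∑ i', ∑ k, x k * conj (ψ (i',j,k)) * v j i' :=
              Finset.sum_congr rfl fun i' _ => Finset.sum_mul _ _ _
          _ = ∑ k, ∑ i', x k * conj (ψ (i',j,k)) * v j i' := Finset.sum_comm
          _ = ∑ k, x k * a k := by
              refine Finset.sum_congr rfl fun k _ => ?_
              simp only [hadef]
              rw [Finset.mul_sum]
              exact Finset.sum_congr rfl fun i' _ => by ring
      have hρv : ρ *ᵥ v j = u j := by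
        simp only [hvdef]
        rw [Matrix.mulVec_mulVec, hinv1, Matrix.one_mulVec]
      have hρvapp : ∀ i, ∑ i', ρ i i' * v j i' = u j i := by
        intro i
        have h := congrFun hρv i
        simpa [Matrix.mulVec, dotProduct] using h
      have hAc : ∑ k, (a k * conj (a k)) = (probB ψ j : ℂ) * conj (w j) := by
        calc ∑ k, a k * conj (a k)
            = ∑ k, ∑ i', ∑ i, v j i' * conj (ψ (i',j,k)) * (conj (v j i) * ψ (i,j,k)) := by
              refine Finset.sum_congr rfl fun k _ => ?_
              simp only [hadef]
              rw [map_sum, Finset.sum_mul_sum]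
              exact Finset.sum_congr rfl fun i' _ => Finset.sum_congr rfl fun i _ => by
                simp only [_root_.map_mul, Complex.conj_conj] <;> ring
          _ = ∑ i', ∑ i, ∑ k, v j i' * conj (ψ (i',j,k)) * (conj (v j i) * ψ (i,j,k)) :=
              sum_swap3 _
          _ = ∑ i', ∑ i, (v j i' * conj (v j i)) * ∑ k, ψ (i,j,k) * conj (ψ (i',j,k)) := by
              refine Finset.sum_congr rfl fun i' _ => Finset.sum_congr rfl fun i _ => ?_
              rw [Finset.mul_sum]
              exact Finset.sum_congr rfl fun k _ => by ring
          _ = ∑ i', ∑ i, (v j i' * conj (v j i)) * ((probB ψ j : ℂ) * ρ i i') :=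
              Finset.sum_congr rfl fun i' _ => Finset.sum_congr rfl fun i _ => by rw [hM]
          _ = (probB ψ j : ℂ) * ∑ i, conj (v j i) * ∑ i', ρ i i' * v j i' := by
              rw [Finset.mul_sum, Finset.sum_comm]
              refine Finset.sum_congr rfl fun i _ => ?_
              rw [Finset.mul_sum, Finset.mul_sum]
              exact Finset.sum_congr rfl fun i' _ => by ring
          _ = (probB ψ j : ℂ) * ∑ i, conj (v j i) * u j i := by
              congr 1
              exact Finset.sum_congr rfl fun i _ => by rw [hρvapp]
          _ = (probB ψ j : ℂ) * conj (w j) := by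
              congr 1
              simp only [hwdef]
              rw [map_sum]
              exact Finset.sum_congr rfl fun i _ => by
                simp only [_root_.map_mul, Complex.conj_conj] <;> ring
      have hAre : ∑ k, Complex.normSq (a k) = probB ψ j * (w j).re := by
        have h1 := congrArg Complex.re hAc
        have h2 : (∑ k, (a k * conj (a k))).re = ∑ k, Complex.normSq (a k) := by
          simp only [Complex.mul_conj, Complex.re_sum, Complex.ofReal_re]
        have h3 : ((probB ψ j : ℂ) * conj (w j)).re = probB ψ j * (w j).re := by
          simp [Complex.mul_re]
        rw [h2, h3] at h1
        exact h1
      have h1 : (w j).re ^ 2 ≤ ‖∑ k, x k * a k‖ ^ 2 := by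
        rw [← hwx, Complex.sq_norm, Complex.normSq_apply]
        nlinarith [sq_nonneg (w j).im]
      have h2 : (w j).re ^ 2 ≤ X * (probB ψ j * (w j).re) := by
        calc (w j).re ^ 2 ≤ ‖∑ k, x k * a k‖ ^ 2 := h1
          _ ≤ X * (∑ k, Complex.normSq (a k)) := cs_aux x a
          _ = X * (probB ψ j * (w j).re) := by rw [hAre]
      rcases le_or_gt (w j).re 0 with ht | ht
      · exact ht.trans (mul_nonneg (hPnn j) hXnn)
      · nlinarith
  have hPsum : ∑ j, probB ψ j = 1 := by
    rw [← hnorm]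
    simp only [probB]
    exact Finset.sum_comm
  calc (dA:ℝ) * Q.re = ((dA:ℂ) * Q).re := by
        simp [Complex.mul_re]
    _ = (∑ j, w j).re := by rw [claimA]
    _ = ∑ j, (w j).re := Complex.re_sum _ _
    _ ≤ ∑ j, probB ψ j * X := Finset.sum_le_sum fun j _ => claimB j
    _ = (∑ j, probB ψ j) * X := (Finset.sum_mul _ _ _).symm
    _ = X := by rw [hPsum, one_mul]


/-- The eigenvalue sequence of `ρ_C` is majorized by `(1/d_A, …, 1/d_A, 0, …)`:
equivalently, the sum of the eigenvalues over any set `s` of indices is at most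
`min (|s|) d_A / d_A`.  (The sum of the `m` largest eigenvalues is the maximum over
index sets of cardinality `m` of the corresponding eigenvalue sums.) -/
theorem stmt1 {dA dB dC : ℕ} (ψ : Fin dA × Fin dB × Fin dC → ℂ) (hnorm : Normalized ψ)
    (hfac : rhoAC ψ = rhoA ψ ⊗ₖ rhoC ψ)
    (hA : (rhoA ψ).IsHermitian)
    (hAfull : ∀ a : Fin dA, hA.eigenvalues a ≠ 0)
    (hpost : ∀ j : Fin dB, 0 < probB ψ j → rhoAPost ψ j = rhoA ψ)
    (hC : (rhoC ψ).IsHermitian) :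
    ∀ s : Finset (Fin dC), ∑ k ∈ s, hC.eigenvalues k ≤ (min s.card dA : ℝ) / dA := by
  intro s
  -- dA positive
  rcases Nat.eq_zero_or_pos dA with h0 | hdA
  · subst h0; simp [Normalized] at hnorm
  have hdA' : (0:ℝ) < dA := by exact_mod_cast hdA
  -- eigenvalue facts
  have hunit : ∀ k, ∑ i, Complex.normSq (hC.eigenvectorBasis k i) = 1 := by
    intro k
    have h1 : ‖hC.eigenvectorBasis k‖ = 1 := hC.eigenvectorBasis.orthonormal.1 k
    rw [EuclideanSpace.norm_eq, Real.sqrt_eq_one] at h1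
    rw [← h1]
    exact Finset.sum_congr rfl fun i _ => by rw [Complex.normSq_eq_norm_sq]
  have heig : ∀ k, hC.eigenvalues k =
      (dotProduct (star (⇑(hC.eigenvectorBasis k))) (rhoC ψ *ᵥ ⇑(hC.eigenvectorBasis k))).re := by
    intro k
    rw [hC.eigenvalues_eq]
    simp [RCLike.re_to_complex]
  have hnonneg : ∀ k, 0 ≤ hC.eigenvalues k := by
    intro k
    rw [heig k]
    exact rhoC_quad_nonneg ψ _
  have hle : ∀ k, hC.eigenvalues k ≤ 1 / dA := by
    intro k
    have h := main_bound ψ hnorm hfac hA hAfull hpost (⇑(hC.eigenvectorBasis k))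
    rw [← heig k] at h
    rw [hunit k] at h
    rw [le_div_iff₀ hdA'] at *
    linarith [h]
  have htr : ∑ k, hC.eigenvalues k = 1 := trace_rhoC ψ hnorm hC
  by_cases hcard : s.card ≤ dA
  · rw [min_eq_left (by exact_mod_cast hcard : ((s.card:ℝ)) ≤ (dA:ℝ))]
    calc ∑ k ∈ s, hC.eigenvalues k ≤ ∑ k ∈ s, 1 / (dA:ℝ) := Finset.sum_le_sum fun k _ => hle k
      _ = s.card / dA := by rw [Finset.sum_const, nsmul_eq_mul]; ring
  · push_neg at hcard
    rw [min_eq_right (by exact_mod_cast hcard.le : ((dA:ℝ)) ≤ (s.card:ℝ))]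
    calc ∑ k ∈ s, hC.eigenvalues k ≤ ∑ k, hC.eigenvalues k :=
          Finset.sum_le_sum_of_subset_of_nonneg (Finset.subset_univ s) (fun k _ _ => hnonneg k)
      _ = 1 := htr
      _ = (dA:ℝ)/dA := by field_simp
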